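/- Let q be a prime power, let h ∈ F_q[X] be monic squarefree of degree at most n, and let s, t be nonnegative integers with s ≠ t. Then gcd(X^{q^s} − X^{q^t}, h) has degree equal to the sum of the degrees of the monic irreducible factors of h whose degree divides |s − t|. -/

import Mathlib

open Polynomial

private lemma natlem {q : ℕ} (hq : 2 ≤ q) (m n : ℕ) :
    q ^ m - 1 ∣ q ^ n - 1 ↔ m ∣ n := by
  have hkey : ∀ a k : ℕ, q ^ a - 1 ∣ q ^ (a * k) - 1 := fun a k => by
    simpa only [one_pow, pow_mul] using Nat.sub_dvd_pow_sub_pow (q ^ a) 1 k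
  constructor
  · intro hdvd
    rcases Nat.eq_zero_or_pos m with hm | hm
    · subst hm
      simp only [pow_zero, Nat.sub_self, zero_dvd_iff] at hdvd
      have hq1 : 1 ≤ q ^ n := Nat.one_le_pow _ _ (by omega)
      have hn : q ^ n = 1 := by omega
      have : n = 0 := by
        by_contra h0
        have := Nat.one_lt_pow h0 (by omega : 1 < q)
        omega
      simp [this]
    · have hmod : n % m + m * (n / m) = n := Nat.mod_add_div n m
      have heq : q ^ n = q ^ (n % m) * q ^ (m * (n / m)) := by
        rw [← pow_add, hmod]
      have h1 : q ^ m - 1 ∣ q ^ n - q ^ (n % m) := by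
        have : q ^ n - q ^ (n % m) = q ^ (n % m) * (q ^ (m * (n / m)) - 1) := by
          rw [Nat.mul_sub, mul_one, ← heq]
        rw [this]
        exact Dvd.dvd.mul_left (hkey m (n / m)) _
      have h2 : q ^ m - 1 ∣ q ^ (n % m) - 1 := by
        have hle : q ^ (n % m) ≤ q ^ n :=
          Nat.pow_le_pow_right (by omega) (Nat.mod_le n m)
        have h1' : 1 ≤ q ^ (n % m) := Nat.one_le_pow _ _ (by omega)
        have := Nat.dvd_sub hdvd h1
        have heq2 : q ^ n - 1 - (q ^ n - q ^ (n % m)) = q ^ (n % m) - 1 := by omega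
        rwa [heq2] at this
      have hr : n % m = 0 := by
        by_contra hr0
        have hlt : q ^ (n % m) < q ^ m :=
          Nat.pow_lt_pow_right (by omega) (Nat.mod_lt n hm)
        have h1' : 1 ≤ q ^ (n % m) := Nat.one_le_pow _ _ (by omega)
        have hne : q ^ (n % m) - 1 ≠ 0 := by
          have := Nat.one_lt_pow hr0 (by omega : 1 < q)
          omega
        have := Nat.le_of_dvd (by omega) h2
        omega
      exact Nat.dvd_of_mod_eq_zero hr
  · rintro ⟨k, rfl⟩
    exact hkey m k

private lemma keydvd (F : Type*) [Field F] [Fintype F] (g : F[X])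
    (hgm : g.Monic) (hg : Irreducible g) (d : ℕ) (hd : d ≠ 0) :
    g ∣ (X ^ (Fintype.card F) ^ d - X : F[X]) ↔ g.natDegree ∣ d := by
  haveI := Fact.mk hg
  set q := Fintype.card F with hqdef
  set K := AdjoinRoot g with hKdef
  set α := AdjoinRoot.root g with hαdef
  have hdvd_iff : g ∣ (X ^ q ^ d - X : F[X]) ↔ α ^ q ^ d = α := by
    rw [← AdjoinRoot.mk_eq_zero, map_sub, map_pow, AdjoinRoot.mk_X, sub_eq_zero]
  let pb := AdjoinRoot.powerBasis' hgm
  haveI : Module.Finite F K := pb.finite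
  haveI : Finite K := Module.finite_of_finite F
  haveI : Fintype K := Fintype.ofFinite K
  have hm : Module.finrank F K = g.natDegree := by
    rw [pb.finrank]
    rfl
  have hcardK : Fintype.card K = q ^ g.natDegree := by
    rw [Module.card_eq_pow_finrank (K := F) (V := K), hm]
  rw [hdvd_iff]
  constructor
  · intro hα
    -- build the iterated Frobenius as an F-algebra endomorphism of K
    set p := ringChar F with hpdef
    have hp : p.Prime := CharP.char_is_prime F p
    haveI := Fact.mk hp
    obtain ⟨nn, -, hq⟩ := FiniteField.card F p
    have hq' : q = p ^ (nn : ℕ) := hq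
    haveI : CharP K p := charP_of_injective_algebraMap (algebraMap F K).injective p
    have hqd : q ^ d = p ^ ((nn : ℕ) * d) := by rw [hq', ← pow_mul]
    let φ : K →ₐ[F] K :=
      { toRingHom := iterateFrobenius K p ((nn : ℕ) * d)
        commutes' := fun a => by
          show (algebraMap F K a) ^ p ^ ((nn : ℕ) * d) = algebraMap F K a
          rw [← map_pow, ← hqd, FiniteField.pow_card_pow] }
    have hφ : ∀ x : K, φ x = x ^ q ^ d := fun x => by
      show iterateFrobenius K p ((nn : ℕ) * d) x = x ^ q ^ d
      rw [iterateFrobenius_def, hqd]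
    have hall : ∀ x : K, x ^ q ^ d = x := by
      intro x
      have hmem : Algebra.adjoin F ({α} : Set K) ≤ AlgHom.equalizer φ (AlgHom.id F K) := by
        apply Algebra.adjoin_le
        intro y hy
        rw [Set.mem_singleton_iff] at hy
        subst hy
        show φ α = α
        rw [hφ, hα]
      have htop : Algebra.adjoin F ({α} : Set K) = ⊤ := AdjoinRoot.adjoinRoot_eq_top
      have hx : x ∈ AlgHom.equalizer φ (AlgHom.id F K) := by
        apply hmem
        rw [htop]
        trivial
      have : φ x = x := hx
      rwa [hφ] at this
    obtain ⟨ζ, hζ⟩ := IsCyclic.exists_generator (α := Kˣ)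
    have hord : orderOf ζ = q ^ g.natDegree - 1 := by
      rw [orderOf_eq_card_of_forall_mem_zpowers hζ, Nat.card_eq_fintype_card,
        Fintype.card_units, hcardK]
    have hζpow : ζ ^ (q ^ d - 1) = 1 := by
      have h1 : (ζ : K) ^ q ^ d = ζ := hall ζ
      have h2 : ζ ^ q ^ d = ζ := Units.ext (by rw [Units.val_pow_eq_pow_val]; exact h1)
      have hq1 : 1 ≤ q ^ d := Nat.one_le_pow _ _ Fintype.card_pos
      have h3 : ζ ^ (q ^ d - 1) * ζ = 1 * ζ := by
        rw [one_mul, ← pow_succ, Nat.sub_add_cancel hq1, h2]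
      exact mul_right_cancel h3
    have hdvd : q ^ g.natDegree - 1 ∣ q ^ d - 1 := by
      rw [← hord]
      exact orderOf_dvd_of_pow_eq_one hζpow
    exact (natlem Fintype.one_lt_card _ _).mp hdvd
  · rintro ⟨c, rfl⟩
    have haux : ∀ (c : ℕ) (x : K), x ^ (q ^ g.natDegree) ^ c = x := by
      intro c x
      induction c with
      | zero => simp
      | succ c ih =>
        rw [pow_succ, pow_mul, ih, ← hcardK, FiniteField.pow_card]
    calc α ^ q ^ (g.natDegree * c) = α ^ (q ^ g.natDegree) ^ c := by rw [← pow_mul]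
      _ = α := haux c α

open UniqueFactorizationMonoid in
private lemma auxcount (F : Type*) [Field F] [Fintype F] [DecidableEq F]
    (h : F[X]) (hmonic : h.Monic) (hsq : Squarefree h)
    (P : F[X]) (hP : P ≠ 0) (D : ℕ) (hD : D ≠ 0)
    (hiff : ∀ g : F[X], Prime g → (g ∣ P ↔ g ∣ (X ^ (Fintype.card F) ^ D - X : F[X]))) :
    (EuclideanDomain.gcd P h).natDegree =
      (((normalizedFactors h).filter (fun g => g.natDegree ∣ D)).map
        Polynomial.natDegree).sum := by
  classical
  have hh0 : h ≠ 0 := hmonic.ne_zero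
  set G := EuclideanDomain.gcd P h with hGdef
  set S := (normalizedFactors h).filter (fun g => g.natDegree ∣ D) with hSdef
  have hG0 : G ≠ 0 := by
    intro h0
    rw [hGdef, EuclideanDomain.gcd_eq_zero_iff] at h0
    exact hP h0.1
  have hSmem : ∀ g ∈ S, g ∈ normalizedFactors h ∧ g.natDegree ∣ D := by
    intro g hg
    rw [hSdef, Multiset.mem_filter] at hg
    exact hg
  have hgprops : ∀ g ∈ normalizedFactors h, Prime g ∧ g.Monic := by
    intro g hg
    have hp := prime_of_normalized_factor g hg
    have hn := normalize_normalized_factor g hg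
    refine ⟨hp, ?_⟩
    have := Polynomial.monic_normalize (p := g) hp.ne_zero
    rwa [hn] at this
  -- S.prod divides h
  have hSh : S.prod ∣ h := by
    have h1 : S ≤ normalizedFactors h := Multiset.filter_le _ _
    exact (Multiset.prod_dvd_prod_of_le h1).trans (prod_normalizedFactors hh0).dvd
  -- S.prod divides P
  have hSP : S.prod ∣ P := by
    have hnodup : S.Nodup :=
      ((squarefree_iff_nodup_normalizedFactors hh0).mp hsq).filter _
    have hsub : S ⊆ normalizedFactors P := by
      intro g hg
      obtain ⟨hgf, hgdeg⟩ := hSmem g hg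
      obtain ⟨hgp, hgmon⟩ := hgprops g hgf
      have hgdvd : g ∣ P := by
        rw [hiff g hgp]
        exact (keydvd F g hgmon hgp.irreducible D hD).mpr hgdeg
      have h1 := (dvd_iff_normalizedFactors_le_normalizedFactors hgp.ne_zero hP).mp hgdvd
      rw [normalizedFactors_irreducible hgp.irreducible,
        normalize_normalized_factor g hgf] at h1
      exact Multiset.mem_of_le h1 (Multiset.mem_singleton_self g)
    have hle : S ≤ normalizedFactors P := (Multiset.le_iff_subset hnodup).mpr hsub
    exact (Multiset.prod_dvd_prod_of_le hle).trans (prod_normalizedFactors hP).dvd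
  -- G divides S.prod
  have hGS : G ∣ S.prod := by
    have hGle : normalizedFactors G ≤ S := by
      rw [hSdef, Multiset.le_filter]
      constructor
      · exact (dvd_iff_normalizedFactors_le_normalizedFactors hG0 hh0).mp
          (EuclideanDomain.gcd_dvd_right P h)
      · intro a ha
        have hap := prime_of_normalized_factor a ha
        have hamon : a.Monic := by
          have := Polynomial.monic_normalize (p := a) hap.ne_zero
          rwa [normalize_normalized_factor a ha] at this
        have hadvd : a ∣ P := (dvd_of_mem_normalizedFactors ha).trans
          (EuclideanDomain.gcd_dvd_left P h)
        rw [hiff a hap] at hadvd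
        exact (keydvd F a hamon hap.irreducible D hD).mp hadvd
    exact ((prod_normalizedFactors hG0).symm.dvd).trans (Multiset.prod_dvd_prod_of_le hGle)
  have hSG : S.prod ∣ G := EuclideanDomain.dvd_gcd hSP hSh
  have hS0 : S.prod ≠ 0 := fun h0 => hh0 (by
    rw [h0] at hSh
    exact zero_dvd_iff.mp hSh)
  have hdeg : G.natDegree = S.prod.natDegree :=
    le_antisymm (Polynomial.natDegree_le_of_dvd hGS hS0)
      (Polynomial.natDegree_le_of_dvd hSG hG0)
  rw [hdeg, Polynomial.natDegree_multiset_prod]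
  intro h0
  obtain ⟨hgf, -⟩ := hSmem 0 h0
  exact (prime_of_normalized_factor 0 hgf).ne_zero rfl

theorem stmt18 (F : Type*) [Field F] [Fintype F] [DecidableEq F]
    (n : ℕ) (h : F[X]) (hmonic : h.Monic) (hsq : Squarefree h)
    (hdeg : h.natDegree ≤ n) (s t : ℕ) (hst : s ≠ t) :
    (EuclideanDomain.gcd
        (X ^ (Fintype.card F) ^ s - X ^ (Fintype.card F) ^ t : F[X]) h).natDegree =
      (((UniqueFactorizationMonoid.normalizedFactors h).filter
          (fun g => g.natDegree ∣ (max s t - min s t))).map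
        Polynomial.natDegree).sum := by
  set q := Fintype.card F with hqdef
  set D := max s t - min s t with hDdef
  set m := min s t with hmdef
  have hq2 : 1 < q := Fintype.one_lt_card
  have hD : D ≠ 0 := by simp only [hDdef, hmdef]; omega
  -- characteristic facts
  set p := ringChar F with hpdef
  have hp : p.Prime := CharP.char_is_prime F p
  haveI := Fact.mk hp
  obtain ⟨nn, -, hq⟩ := FiniteField.card F p
  have hq' : q = p ^ (nn : ℕ) := hq
  -- the identity (X^{q^D} - X)^{q^m} = X^{q^{max}} - X^{q^{min}}
  have hqm : q ^ m = p ^ ((nn : ℕ) * m) := by rw [hq', ← pow_mul]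
  have hDm : D + m = max s t := by simp only [hDdef, hmdef]; omega
  have hident : ((X ^ q ^ D - X : F[X])) ^ q ^ m =
      X ^ q ^ (max s t) - X ^ q ^ m := by
    calc (X ^ q ^ D - X : F[X]) ^ q ^ m
        = (X ^ q ^ D : F[X]) ^ q ^ m - X ^ q ^ m := by
          rw [hqm]
          exact sub_pow_char_pow (R := F[X]) (p := p) ..
      _ = X ^ q ^ (max s t) - X ^ q ^ m := by
          rw [← pow_mul, ← pow_add, hDm]
  have hXne : (X ^ q ^ D - X : F[X]) ≠ 0 :=
    FiniteField.X_pow_card_pow_sub_X_ne_zero F hD hq2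
  have hqmne : q ^ m ≠ 0 := pow_ne_zero _ (by omega)
  rcases lt_or_gt_of_ne hst with hlt | hlt
  · -- s < t : X^{q^s} - X^{q^t} = -(X^{q^t} - X^{q^s})
    have hmax : max s t = t := max_eq_right hlt.le
    have hmin : m = s := min_eq_left hlt.le
    have hPeq : (X ^ q ^ s - X ^ q ^ t : F[X]) = -((X ^ q ^ D - X) ^ q ^ m) := by
      rw [hident, hmax, hmin, neg_sub]
    have hPne : (X ^ q ^ s - X ^ q ^ t : F[X]) ≠ 0 := by
      rw [hPeq]
      exact neg_ne_zero.mpr (pow_ne_zero _ hXne)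
    refine auxcount F h hmonic hsq _ hPne D hD ?_
    intro g hg
    rw [hPeq, dvd_neg]
    exact ⟨fun hd => hg.dvd_of_dvd_pow hd, fun hd => hd.trans (dvd_pow_self _ hqmne)⟩
  · -- t < s
    have hmax : max s t = s := max_eq_left hlt.le
    have hmin : m = t := min_eq_right hlt.le
    have hPeq : (X ^ q ^ s - X ^ q ^ t : F[X]) = (X ^ q ^ D - X) ^ q ^ m := by
      rw [hident, hmax, hmin]
    have hPne : (X ^ q ^ s - X ^ q ^ t : F[X]) ≠ 0 := by
      rw [hPeq]
      exact pow_ne_zero _ hXne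
    refine auxcount F h hmonic hsq _ hPne D hD ?_
    intro g hg
    rw [hPeq]
    exact ⟨fun hd => hg.dvd_of_dvd_pow hd, fun hd => hd.trans (dvd_pow_self _ hqmne)⟩
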